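/- arXiv:1907.13110 — 2 statements merged into one kernel-verified Lean document; each statement's English description precedes it below -/
import Mathlib

section
/- Let G be a connected simple graph on n ≥ 2 vertices with diameter 𝒟 (the maximum over pairs of vertices of the graph distance), and let W̄_{P^r} be its effective-resistance gossiping matrix. Then the second largest eigenvalue of W̄_{P^r} satisfies λ_{n−1}(W̄_{P^r}) ≤ 1 − 1/(6·𝒟·n³). -/
open Matrix BigOperators Finset

/-- The standard basis vector `e i` of `ℝⁿ`. -/
def stdBasisVec {n : ℕ} (i : Fin n) : Fin n → ℝ := fun k => if k = i then 1 else 0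

section Auxiliary

lemma e_dot' {n : ℕ} (i j : Fin n) (w : Fin n → ℝ) :
    (stdBasisVec i - stdBasisVec j) ⬝ᵥ w = w i - w j := by
  simp [dotProduct, stdBasisVec, Pi.sub_apply, sub_mul, Finset.sum_sub_distrib,
    ite_mul, Finset.sum_ite_eq']

/-- Effective resistance between adjacent vertices is at least `2/n`. -/
lemma R_lb' {n : ℕ} (hn : 2 ≤ n) {G : SimpleGraph (Fin n)} [DecidableRel G.Adj]
    {i j : Fin n} (hadj : G.Adj i j) {v : Fin n → ℝ}
    (hv : G.lapMatrix ℝ *ᵥ v = stdBasisVec i - stdBasisVec j) :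
    2 / (n : ℝ) ≤ v i - v j := by
  classical
  set L := G.lapMatrix ℝ with hL
  set e : Fin n → ℝ := stdBasisVec i - stdBasisVec j with he
  have hij : i ≠ j := hadj.ne
  have hpsd : ∀ z : Fin n → ℝ, 0 ≤ z ⬝ᵥ (L *ᵥ z) := by
    intro z
    simpa using (SimpleGraph.posSemidef_lapMatrix ℝ G).dotProduct_mulVec_nonneg z
  have hsym : ∀ x y : Fin n → ℝ, x ⬝ᵥ (L *ᵥ y) = y ⬝ᵥ (L *ᵥ x) := by
    intro x y
    rw [Matrix.dotProduct_mulVec, ← Matrix.mulVec_transpose,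
      (G.isSymm_lapMatrix ℝ : Lᵀ = L), dotProduct_comm]
  set Rv : ℝ := v i - v j with hRv
  have hvLv : v ⬝ᵥ (L *ᵥ v) = Rv := by
    rw [hv, dotProduct_comm, he, e_dot']
  have hR0 : 0 ≤ Rv := hvLv ▸ hpsd v
  have heLv : e ⬝ᵥ (L *ᵥ v) = 2 := by
    rw [hv, he, e_dot']
    simp [stdBasisVec, Pi.sub_apply, hij, Ne.symm hij]
    norm_num
  have hvLe : v ⬝ᵥ (L *ᵥ e) = 2 := by rw [hsym, heLv]
  set c : ℝ := e ⬝ᵥ (L *ᵥ e) with hc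
  have hdeg : ∀ k : Fin n, (G.degree k : ℝ) ≤ (n : ℝ) - 1 := by
    intro k
    have h' := G.degree_lt_card_verts k
    rw [Fintype.card_fin] at h'
    have h'' : G.degree k + 1 ≤ n := h'
    have := (Nat.cast_le (α := ℝ)).mpr h''
    push_cast at this
    linarith
  have hcval : c ≤ 2 * n := by
    have h1 : c = (L *ᵥ e) i - (L *ᵥ e) j := by rw [hc, he, e_dot']
    have h2 : (L *ᵥ e) i = (G.degree i : ℝ) + 1 := by
      rw [hL, SimpleGraph.lapMatrix_mulVec_apply]
      simp [he, stdBasisVec, Pi.sub_apply, Finset.sum_sub_distrib, Finset.sum_ite_eq',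
        SimpleGraph.mem_neighborFinset, hij, Ne.symm hij, hadj, G.irrefl]
    have h3 : (L *ᵥ e) j = -(G.degree j : ℝ) - 1 := by
      rw [hL, SimpleGraph.lapMatrix_mulVec_apply]
      simp [he, stdBasisVec, Pi.sub_apply, Finset.sum_sub_distrib, Finset.sum_ite_eq',
        SimpleGraph.mem_neighborFinset, hij, Ne.symm hij, hadj.symm, G.irrefl]
    rw [h1, h2, h3]
    have := hdeg i
    have := hdeg j
    linarith
  have hexp : ∀ s : ℝ, 0 ≤ c + 4 * s + s ^ 2 * Rv := by
    intro s
    have h0 := hpsd (e + s • v)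
    rw [Matrix.mulVec_add, Matrix.mulVec_smul, dotProduct_add,
      add_dotProduct, add_dotProduct, dotProduct_smul,
      smul_dotProduct, smul_dotProduct, dotProduct_smul] at h0
    simp only [smul_eq_mul] at h0
    rw [hvLe, heLv, hvLv] at h0
    nlinarith [h0]
  have hRne : Rv ≠ 0 := by
    intro h0
    have := hexp (-(c + 1) / 4)
    rw [h0] at this
    nlinarith
  have hRpos : 0 < Rv := lt_of_le_of_ne hR0 (Ne.symm hRne)
  have hfin := hexp (-(2 / Rv))
  have hss : (-(2 / Rv)) ^ 2 * Rv = 4 / Rv := by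
    field_simp
    ring
  rw [hss] at hfin
  have hkey : 4 * (-(2 / Rv)) + 4 / Rv = -(4 / Rv) := by ring
  have h4c : 4 / Rv ≤ c := by linarith
  have hnpos : (0:ℝ) < n := by positivity
  rw [div_le_iff₀ hnpos]
  have h4 : (4:ℝ) ≤ c * Rv := (div_le_iff₀ hRpos).mp h4c
  nlinarith [h4, hcval, hRpos]

lemma tele_aux' {n : ℕ} {G : SimpleGraph (Fin n)} (y : Fin n → ℝ) {a b : Fin n}
    (p : G.Walk a b) :
    (y a - y b)^2 ≤ (p.length : ℝ) *
      ((p.darts.map (fun d => (y d.toProd.1 - y d.toProd.2)^2)).sum) := by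
  induction p with
  | nil => simp
  | @cons u c w h q ih =>
    have hS : (0:ℝ) ≤ (q.darts.map (fun d => (y d.toProd.1 - y d.toProd.2)^2)).sum := by
      apply List.sum_nonneg
      intro z hz
      obtain ⟨d, -, rfl⟩ := List.mem_map.1 hz
      positivity
    simp only [SimpleGraph.Walk.darts_cons, SimpleGraph.Walk.length_cons, List.map_cons,
      List.sum_cons, Nat.cast_add, Nat.cast_one]
    rcases Nat.eq_zero_or_pos q.length with h0 | hpos
    · have h1 : (y c - y w)^2 ≤ 0 := by simpa [h0] using ih
      have hcb : y c = y w := by nlinarith [sq_nonneg (y c - y w)]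
      rw [h0]
      push_cast
      nlinarith [sq_nonneg (y u - y w)]
    · have hm1 : (1:ℝ) ≤ (q.length : ℝ) := by exact_mod_cast hpos
      nlinarith [sq_nonneg ((q.length : ℝ) * (y u - y c) - (y c - y w)), ih, hS,
        sq_nonneg (y u - y c)]

/-- Fiedler-type bound: for mean-zero `x`,
`‖x‖² ≤ n · diam · ∑∑ (adjacent) (xᵢ - xⱼ)²`. -/
lemma fiedler_bound' {n : ℕ} (hn : 2 ≤ n) {G : SimpleGraph (Fin n)} [DecidableRel G.Adj]
    (hconn : G.Connected) (diam : ℕ)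
    (hdiam : IsGreatest {d : ℕ | ∃ u v : Fin n, d = G.dist u v} diam)
    (x : Fin n → ℝ) (hsum : ∑ k, x k = 0) :
    x ⬝ᵥ x ≤ (n : ℝ) * (diam : ℝ) *
      (∑ i, ∑ j, if G.Adj i j then (x i - x j)^2 else 0) := by
  classical
  have hne : (univ : Finset (Fin n)).Nonempty := ⟨⟨0, by omega⟩, Finset.mem_univ _⟩
  obtain ⟨a, -, ha⟩ := Finset.exists_max_image univ x hne
  obtain ⟨b, -, hb⟩ := Finset.exists_min_image univ x hne
  have hxa : 0 ≤ x a := by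
    by_contra hneg
    push_neg at hneg
    have : (∑ k, x k) < 0 := by
      have := Finset.sum_lt_sum_of_nonempty hne
        (f := x) (g := fun _ => (0:ℝ)) ?_
      · simpa using this
      · intro k _; exact lt_of_le_of_lt (ha k (Finset.mem_univ k)) hneg
    linarith [hsum]
  have hxb : x b ≤ 0 := by
    by_contra hneg
    push_neg at hneg
    have : (0:ℝ) < ∑ k, x k := by
      have := Finset.sum_lt_sum_of_nonempty hne
        (f := fun _ => (0:ℝ)) (g := x) ?_
      · simpa using this
      · intro k _; exact lt_of_lt_of_le hneg (hb k (Finset.mem_univ k))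
    linarith [hsum]
  set S : ℝ := ∑ i, ∑ j, if G.Adj i j then (x i - x j)^2 else 0 with hS
  have hSnn : 0 ≤ S := by
    apply Finset.sum_nonneg
    intro i _
    apply Finset.sum_nonneg
    intro j _
    split_ifs <;> positivity
  have hxx : x ⬝ᵥ x ≤ (n : ℝ) * (x a - x b)^2 := by
    have h1 : x ⬝ᵥ x = ∑ k, x k * x k := rfl
    have h2 : ∀ k : Fin n, x k * x k ≤ (x a - x b)^2 := by
      intro k
      have h3 := ha k (Finset.mem_univ k)
      have h4 := hb k (Finset.mem_univ k)
      nlinarith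
    calc x ⬝ᵥ x = ∑ k, x k * x k := h1
      _ ≤ ∑ _k : Fin n, (x a - x b)^2 := Finset.sum_le_sum fun k _ => h2 k
      _ = (n : ℝ) * (x a - x b)^2 := by
          rw [Finset.sum_const, Finset.card_univ, Fintype.card_fin, nsmul_eq_mul]
  obtain ⟨p, hp⟩ := hconn.exists_walk_length_eq_dist a b
  set q := p.bypass with hqdef
  have hqpath : q.IsPath := p.bypass_isPath
  have hlen : (q.length : ℝ) ≤ (diam : ℝ) := by
    have h1 : q.length ≤ p.length := p.length_bypass_le
    have h2 : G.dist a b ≤ diam := hdiam.2 ⟨a, b, rfl⟩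
    have h3 : q.length ≤ diam := by omega
    exact_mod_cast h3
  have hdartsum_nn : (0:ℝ) ≤ (q.darts.map (fun d => (x d.toProd.1 - x d.toProd.2)^2)).sum := by
    apply List.sum_nonneg
    intro z hz
    obtain ⟨d, -, rfl⟩ := List.mem_map.1 hz
    positivity
  have htele := tele_aux' x q
  have hdarts_le : (q.darts.map (fun d => (x d.toProd.1 - x d.toProd.2)^2)).sum ≤ S := by
    set g : Fin n × Fin n → ℝ := fun pr => if G.Adj pr.1 pr.2 then (x pr.1 - x pr.2)^2 else 0
      with hg
    have hmm : (q.darts.map (fun d => (x d.toProd.1 - x d.toProd.2)^2)).sum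
        = ((q.darts.map (fun d => d.toProd)).map g).sum := by
      rw [List.map_map]
      congr 1
      apply List.map_congr_left
      intro d _
      simp only [Function.comp_apply, hg]
      rw [if_pos d.adj]
    have hnd : (q.darts.map (fun d => d.toProd)).Nodup :=
      (SimpleGraph.Walk.darts_nodup_of_support_nodup hqpath.support_nodup).map
        SimpleGraph.Dart.toProd_injective
    have hfin : ((q.darts.map (fun d => d.toProd)).map g).sum
        = (q.darts.map (fun d => d.toProd)).toFinset.sum g :=
      (List.sum_toFinset g hnd).symm
    have hsub : (q.darts.map (fun d => d.toProd)).toFinset ⊆ (univ : Finset (Fin n × Fin n)) :=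
      Finset.subset_univ _
    have hle : (q.darts.map (fun d => d.toProd)).toFinset.sum g
        ≤ ∑ pr : Fin n × Fin n, g pr := by
      apply Finset.sum_le_sum_of_subset_of_nonneg hsub
      intro pr _ _
      by_cases hadj : G.Adj pr.1 pr.2 <;> simp [hg, hadj] <;> positivity
    have hSfin : (∑ pr : Fin n × Fin n, g pr) = S := by
      rw [hS, Fintype.sum_prod_type]
    rw [hmm, hfin]
    rw [hSfin] at hle
    exact hle
  have step : (x a - x b)^2 ≤ (diam : ℝ) * S := by
    calc (x a - x b)^2 ≤ (q.length : ℝ) *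
        ((q.darts.map (fun d => (x d.toProd.1 - x d.toProd.2)^2)).sum) := htele
      _ ≤ (diam : ℝ) * S := by
          apply mul_le_mul hlen hdarts_le hdartsum_nn (by positivity)
  calc x ⬝ᵥ x ≤ (n : ℝ) * (x a - x b)^2 := hxx
    _ ≤ (n : ℝ) * ((diam : ℝ) * S) := by
        apply mul_le_mul_of_nonneg_left step (by positivity)
    _ = (n : ℝ) * (diam : ℝ) * S := by ring

lemma sum_sym_eq' {n : ℕ} (f g : Fin n → Fin n → ℝ)
    (h : ∀ i j, f i j + f j i = 2 * g i j) :
    ∑ i, ∑ j, f i j = ∑ i, ∑ j, g i j := by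
  have h1 : (∑ i : Fin n, ∑ j : Fin n, f j i) = ∑ i : Fin n, ∑ j : Fin n, f i j :=
    Finset.sum_comm
  have h2 : (∑ i : Fin n, ∑ j : Fin n, f i j) + (∑ i : Fin n, ∑ j : Fin n, f j i)
      = 2 * ∑ i : Fin n, ∑ j : Fin n, g i j := by
    rw [← Finset.sum_add_distrib]
    simp_rw [← Finset.sum_add_distrib, h]
    rw [Finset.mul_sum]
    exact Finset.sum_congr rfl fun i _ => (Finset.mul_sum _ _ _).symm
  linarith

/-- Quadratic-form identity for the gossiping matrix. -/
lemma form_eq' {n : ℕ} (G : SimpleGraph (Fin n)) [DecidableRel G.Adj]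
    (hc : ((n:ℝ) - 1) ≠ 0)
    (R : Fin n → Fin n → ℝ) (hRsymm : ∀ i j, G.Adj i j → R i j = R j i) (x : Fin n → ℝ) :
    x ⬝ᵥ (((1 : Matrix (Fin n) (Fin n) ℝ)
        - (1/2 : ℝ) • (Matrix.diagonal fun i => (∑ j ∈ G.neighborFinset i, R i j) / ((n:ℝ)-1))
        + Matrix.of fun i j => if G.Adj i j then R i j / (2*((n:ℝ)-1)) else 0) *ᵥ x)
    = x ⬝ᵥ x - (∑ i, ∑ j, if G.Adj i j then R i j * (x i - x j)^2 else 0) / (4*((n:ℝ)-1)) := by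
  classical
  rw [Matrix.add_mulVec, Matrix.sub_mulVec, Matrix.smul_mulVec, Matrix.one_mulVec,
    dotProduct_add, dotProduct_sub, dotProduct_smul]
  simp only [smul_eq_mul]
  have hD : x ⬝ᵥ ((Matrix.diagonal fun i => (∑ j ∈ G.neighborFinset i, R i j) / ((n:ℝ)-1)) *ᵥ x)
      = ∑ i, ∑ j, (if G.Adj i j then R i j * (x i * x i) / ((n:ℝ)-1) else 0) := by
    simp only [dotProduct, Matrix.mulVec_diagonal]
    refine Finset.sum_congr rfl fun i _ => ?_
    rw [SimpleGraph.neighborFinset_eq_filter, Finset.sum_filter]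
    have step : ∀ j : Fin n, (if G.Adj i j then R i j * (x i * x i) / ((n:ℝ)-1) else 0)
        = (if G.Adj i j then R i j else 0) * (x i * x i / ((n:ℝ)-1)) := by
      intro j; split_ifs <;> ring
    rw [Finset.sum_congr rfl fun j _ => step j, ← Finset.sum_mul]
    ring
  have hP : x ⬝ᵥ ((Matrix.of fun i j => if G.Adj i j then R i j / (2*((n:ℝ)-1)) else 0) *ᵥ x)
      = ∑ i, ∑ j, (if G.Adj i j then R i j * (x i * x j) / (2*((n:ℝ)-1)) else 0) := by
    simp only [dotProduct, Matrix.mulVec, Matrix.of_apply]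
    rw [Finset.sum_congr rfl fun i _ => (Finset.mul_sum _ _ _ : x i * _ = _)]
    refine Finset.sum_congr rfl fun i _ => Finset.sum_congr rfl fun j _ => ?_
    split_ifs <;> ring
  rw [hD, hP]
  have key : (∑ i, ∑ j, (if G.Adj i j then R i j * (x i * x j) / (2*((n:ℝ)-1)) else 0))
      - 1/2 * (∑ i, ∑ j, (if G.Adj i j then R i j * (x i * x i) / ((n:ℝ)-1) else 0))
      = - ((∑ i, ∑ j, if G.Adj i j then R i j * (x i - x j)^2 else 0) / (4*((n:ℝ)-1))) := by
    have e1 : (1:ℝ)/2 * (∑ i, ∑ j, (if G.Adj i j then R i j * (x i * x i) / ((n:ℝ)-1) else 0))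
        = ∑ i, ∑ j, 1/2 * (if G.Adj i j then R i j * (x i * x i) / ((n:ℝ)-1) else 0) := by
      rw [Finset.mul_sum]
      exact Finset.sum_congr rfl fun i _ => Finset.mul_sum _ _ _
    have e2 : (∑ i, ∑ j, if G.Adj i j then R i j * (x i - x j)^2 else 0) / (4*((n:ℝ)-1))
        = ∑ i, ∑ j, (if G.Adj i j then R i j * (x i - x j)^2 else 0) / (4*((n:ℝ)-1)) := by
      rw [Finset.sum_div]
      exact Finset.sum_congr rfl fun i _ => Finset.sum_div _ _ _
    rw [e1, e2, ← Finset.sum_sub_distrib, ← Finset.sum_neg_distrib]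
    simp_rw [← Finset.sum_sub_distrib, ← Finset.sum_neg_distrib]
    apply sum_sym_eq'
    intro i j
    by_cases hadj : G.Adj i j
    · have hadj' : G.Adj j i := hadj.symm
      rw [if_pos hadj, if_pos hadj', if_pos hadj, if_pos hadj', if_pos hadj]
      rw [hRsymm i j hadj]
      field_simp
      ring
    · have hadj' : ¬ G.Adj j i := fun h => hadj h.symm
      rw [if_neg hadj, if_neg hadj', if_neg hadj, if_neg hadj', if_neg hadj]
      ring
  linarith [key]

open Polynomial in
lemma charpoly_conj_unitary' {m : ℕ} (U D : Matrix (Fin m) (Fin m) ℝ)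
    (hU : U * star U = 1) :
    (U * D * star U).charpoly = D.charpoly := by
  classical
  let f : Matrix (Fin m) (Fin m) ℝ →+* Matrix (Fin m) (Fin m) ℝ[X] :=
    (Polynomial.C : ℝ →+* ℝ[X]).mapMatrix
  have hcomm : ∀ M : Matrix (Fin m) (Fin m) ℝ[X],
      M * Matrix.diagonal (fun _ => (X : ℝ[X])) = Matrix.diagonal (fun _ => (X : ℝ[X])) * M := by
    intro M
    ext i j
    simp [Matrix.mul_diagonal, Matrix.diagonal_mul, mul_comm]
  have hchar : ∀ M : Matrix (Fin m) (Fin m) ℝ,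
      charmatrix M = Matrix.diagonal (fun _ => (X : ℝ[X])) - f M := by
    intro M
    ext i j
    by_cases hij : i = j
    · subst hij; simp [charmatrix_apply_eq, f]
    · simp [charmatrix_apply_ne _ _ _ hij, Matrix.diagonal_apply_ne _ hij, f]
  have hfone : f (U * star U) = 1 := by rw [hU, RingHom.map_one]
  have key : charmatrix (U * D * star U) = f U * charmatrix D * f (star U) := by
    rw [hchar, hchar]
    rw [Matrix.mul_sub, Matrix.sub_mul]
    congr 1
    · rw [hcomm (f U), Matrix.mul_assoc, ← map_mul f, hfone, Matrix.mul_one]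
    · rw [← map_mul f, ← map_mul f]
  unfold Matrix.charpoly
  rw [key, Matrix.det_mul, Matrix.det_mul]
  have hdet : (f U).det * (f (star U)).det = 1 := by
    rw [← Matrix.det_mul, ← map_mul f, hfone, Matrix.det_one]
  calc (f U).det * (charmatrix D).det * (f (star U)).det
      = ((f U).det * (f (star U)).det) * (charmatrix D).det := by ring
    _ = (charmatrix D).det := by rw [hdet, one_mul]

open Polynomial in
lemma herm_charpoly' {m : ℕ} {A : Matrix (Fin m) (Fin m) ℝ} (hA : A.IsHermitian) :
    A.charpoly = ∏ i : Fin m, (X - C (hA.eigenvalues i)) := by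
  have hU := Matrix.mem_unitaryGroup_iff.mp (hA.eigenvectorUnitary).2
  have hd : (RCLike.ofReal ∘ hA.eigenvalues : Fin m → ℝ) = hA.eigenvalues := by
    funext i; simp
  have h1 : A.charpoly = ((hA.eigenvectorUnitary : Matrix (Fin m) (Fin m) ℝ) *
      Matrix.diagonal hA.eigenvalues *
      star (hA.eigenvectorUnitary : Matrix (Fin m) (Fin m) ℝ)).charpoly := by
    conv_lhs => rw [hA.spectral_theorem]
    rw [hd, Unitary.conjStarAlgAut_apply]
  rw [h1, charpoly_conj_unitary' _ _ hU,
    Matrix.charpoly_of_upperTriangular _ (Matrix.blockTriangular_diagonal _)]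
  simp

open Polynomial in
lemma two_large' {m : ℕ} (μ ν : Fin m → ℝ) (t : ℝ)
    (h : ∏ i : Fin m, (X - C (μ i)) = ∏ i : Fin m, (X - C (ν i)))
    (i1 i2 : Fin m) (h12 : i1 ≠ i2) (h1 : t < μ i1) (h2 : t < μ i2) :
    ∃ j1 j2 : Fin m, j1 ≠ j2 ∧ t < ν j1 ∧ t < ν j2 := by
  classical
  have hmult : Multiset.map μ univ.val = Multiset.map ν univ.val := by
    have h1' : ∏ i : Fin m, (X - C (μ i))
        = (Multiset.map (fun a => X - C a) (Multiset.map μ univ.val)).prod := by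
      rw [Multiset.map_map, Finset.prod_eq_multiset_prod]; rfl
    have h2' : ∏ i : Fin m, (X - C (ν i))
        = (Multiset.map (fun a => X - C a) (Multiset.map ν univ.val)).prod := by
      rw [Multiset.map_map, Finset.prod_eq_multiset_prod]; rfl
    have := congrArg Polynomial.roots (h1'.symm.trans (h.trans h2'))
    rwa [Polynomial.roots_multiset_prod_X_sub_C, Polynomial.roots_multiset_prod_X_sub_C] at this
  have hcard : ∀ f : Fin m → ℝ,
      Multiset.countP (fun r => t < r) (Multiset.map f univ.val)
        = (univ.filter (fun i => t < f i)).card := by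
    intro f
    rw [Multiset.countP_map]
    rfl
  have hμ : 1 < (univ.filter (fun i => t < μ i)).card := by
    have hsub : ({i1, i2} : Finset (Fin m)) ⊆ univ.filter (fun i => t < μ i) := by
      intro z hz
      simp only [Finset.mem_insert, Finset.mem_singleton] at hz
      rcases hz with rfl | rfl <;> simp [h1, h2]
    have := Finset.card_le_card hsub
    rwa [Finset.card_pair h12] at this
  have hν : 1 < (univ.filter (fun i => t < ν i)).card := by
    rw [← hcard, ← hmult, hcard]; exact hμ
  obtain ⟨a, ha, b, hb, hab⟩ := Finset.one_lt_card.1 hν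
  simp only [Finset.mem_filter] at ha hb
  exact ⟨a, b, hab, ha.2, hb.2⟩

end Auxiliary

set_option maxHeartbeats 1600000 in
/-- For a connected graph `G` on `n ≥ 2` vertices with diameter `𝒟`, the second largest
eigenvalue of the effective-resistance gossiping matrix `W̄_{P^r} = I − D^r/2 + P^r` satisfies
`λ_{n−1}(W̄_{P^r}) ≤ 1 − 1/(6 𝒟 n³)`. -/
theorem stmt14 (n : ℕ) (hn : 2 ≤ n) (G : SimpleGraph (Fin n)) [DecidableRel G.Adj]
    (hconn : G.Connected)
    -- `diam` is the diameter: the maximum over pairs of vertices of the graph distance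
    (diam : ℕ) (hdiam : IsGreatest {d : ℕ | ∃ u v : Fin n, d = G.dist u v} diam)
    -- the effective resistances, characterized via the Laplacian:
    (R : Fin n → Fin n → ℝ)
    (hR : ∀ i j, G.Adj i j →
      ∃ v : Fin n → ℝ, G.lapMatrix ℝ *ᵥ v = stdBasisVec i - stdBasisVec j ∧
        R i j = v i - v j)
    -- the effective-resistance gossiping matrix `W̄_{P^r} = I − D^r/2 + P^r`:
    (Pr Dr Wr : Matrix (Fin n) (Fin n) ℝ)
    (hPr : Pr = Matrix.of fun i j => if G.Adj i j then R i j / (2 * ((n : ℝ) - 1)) else 0)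
    (hDr : Dr = Matrix.diagonal fun i =>
      (∑ j ∈ G.neighborFinset i, R i j) / ((n : ℝ) - 1))
    (hWr : Wr = (1 : Matrix (Fin n) (Fin n) ℝ) - (1 / 2 : ℝ) • Dr + Pr) :
    ∀ μ : Fin n → ℝ, Monotone μ →
      Wr.charpoly = ∏ i : Fin n, (Polynomial.X - Polynomial.C (μ i)) →
      μ ⟨n - 2, by omega⟩ ≤ 1 - 1 / (6 * (diam : ℝ) * (n : ℝ) ^ 3) := by
  classical
  intro μ hmono hchar
  by_contra hcon
  push_neg at hcon
  set t : ℝ := 1 - 1 / (6 * (diam : ℝ) * (n : ℝ) ^ 3) with ht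
  -- basic facts
  have hnR : (2:ℝ) ≤ (n:ℝ) := by exact_mod_cast hn
  have hcpos : (0:ℝ) < (n:ℝ) - 1 := by linarith
  have hc1 : ((n:ℝ) - 1) ≠ 0 := ne_of_gt hcpos
  have hd1 : 1 ≤ diam := by
    have hne01 : (⟨0, by omega⟩ : Fin n) ≠ ⟨1, by omega⟩ := by simp [Fin.ext_iff]
    have hpos := hconn.pos_dist_of_ne hne01
    have hmem : G.dist (⟨0, by omega⟩ : Fin n) (⟨1, by omega⟩ : Fin n)
        ∈ {d : ℕ | ∃ u v : Fin n, d = G.dist u v} := ⟨_, _, rfl⟩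
    have := hdiam.2 hmem
    omega
  have hdR : (1:ℝ) ≤ (diam:ℝ) := by exact_mod_cast hd1
  have hdpos : (0:ℝ) < (diam:ℝ) := by linarith
  -- symmetry of R on edges
  have hker : ∀ w : Fin n → ℝ, G.lapMatrix ℝ *ᵥ w = 0 → ∀ i j : Fin n, w i = w j := by
    intro w hw i j
    have h' : Matrix.toLin' (G.lapMatrix ℝ) w = 0 := by
      rw [Matrix.toLin'_apply, hw]
    exact (SimpleGraph.lapMatrix_mulVec_eq_zero_iff_forall_reachable G).mp hw i j
      (hconn.preconnected i j)
  have hRsymm : ∀ i j, G.Adj i j → R i j = R j i := by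
    intro i j hadj
    obtain ⟨v, hv, hRv⟩ := hR i j hadj
    obtain ⟨w, hw, hRw⟩ := hR j i hadj.symm
    have hz : G.lapMatrix ℝ *ᵥ (v + w) = 0 := by
      rw [Matrix.mulVec_add, hv, hw]
      ext k
      simp only [Pi.add_apply, Pi.sub_apply, Pi.zero_apply]
      ring
    have hvw := hker _ hz i j
    simp only [Pi.add_apply] at hvw
    rw [hRv, hRw]
    linarith
  -- lower bound on R on edges
  have hRlb : ∀ i j, G.Adj i j → 2 ≤ R i j * (n:ℝ) := by
    intro i j hadj
    obtain ⟨v, hv, hRv⟩ := hR i j hadj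
    have := R_lb' hn hadj hv
    rw [hRv]
    have hnpos : (0:ℝ) < n := by linarith
    calc (2:ℝ) = (2 / (n:ℝ)) * n := by field_simp
      _ ≤ (v i - v j) * n := by
          apply mul_le_mul_of_nonneg_right this (le_of_lt hnpos)
  -- Wr is symmetric
  have WrHerm : Wr.IsHermitian := by
    rw [hWr, hPr, hDr]
    ext i j
    simp only [Matrix.conjTranspose_apply, Matrix.add_apply, Matrix.sub_apply,
      Matrix.smul_apply, Matrix.one_apply, Matrix.diagonal_apply, Matrix.of_apply,
      smul_eq_mul, star_trivial]
    by_cases hij : i = j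
    · subst hij; rfl
    · rw [if_neg (Ne.symm hij), if_neg hij, if_neg (Ne.symm hij), if_neg hij]
      by_cases hadj : G.Adj i j
      · rw [if_pos hadj.symm, if_pos hadj, hRsymm i j hadj]
      · rw [if_neg (fun h => hadj h.symm), if_neg hadj]
  -- quadratic form bound for mean-zero vectors
  have hquad : ∀ x : Fin n → ℝ, (∑ k, x k = 0) → x ⬝ᵥ (Wr *ᵥ x) ≤ t * (x ⬝ᵥ x) := by
    intro x hsum
    have hform : x ⬝ᵥ (Wr *ᵥ x) = x ⬝ᵥ x -
        (∑ i, ∑ j, if G.Adj i j then R i j * (x i - x j)^2 else 0) / (4*((n:ℝ)-1)) := by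
      rw [hWr, hPr, hDr]
      exact form_eq' G hc1 R hRsymm x
    set Q : ℝ := ∑ i, ∑ j, if G.Adj i j then R i j * (x i - x j)^2 else 0 with hQ
    set S : ℝ := ∑ i, ∑ j, if G.Adj i j then (x i - x j)^2 else 0 with hSd
    have hQnn : 0 ≤ Q := by
      apply Finset.sum_nonneg; intro i _
      apply Finset.sum_nonneg; intro j _
      split_ifs with hadj
      · have h2 := hRlb i j hadj
        have hnpos : (0:ℝ) < n := by linarith
        have hR0 : 0 ≤ R i j := by nlinarith
        positivity
      · exact le_rfl
    have hSnn : 0 ≤ S := by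
      apply Finset.sum_nonneg; intro i _
      apply Finset.sum_nonneg; intro j _
      split_ifs <;> positivity
    have hQS : 2 * S ≤ (n:ℝ) * Q := by
      have e1 : 2 * S = ∑ i, ∑ j, 2 * (if G.Adj i j then (x i - x j)^2 else 0) := by
        rw [hSd, Finset.mul_sum]
        exact Finset.sum_congr rfl fun i _ => Finset.mul_sum _ _ _
      have e2 : (n:ℝ) * Q = ∑ i, ∑ j, (n:ℝ) * (if G.Adj i j then R i j * (x i - x j)^2 else 0) := by
        rw [hQ, Finset.mul_sum]
        exact Finset.sum_congr rfl fun i _ => Finset.mul_sum _ _ _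
      rw [e1, e2]
      apply Finset.sum_le_sum
      intro i _
      apply Finset.sum_le_sum
      intro j _
      by_cases hadj : G.Adj i j
      · rw [if_pos hadj, if_pos hadj]
        nlinarith [mul_nonneg (sub_nonneg.mpr (hRlb i j hadj)) (sq_nonneg (x i - x j))]
      · rw [if_neg hadj, if_neg hadj]
        simp
    have hfied := fiedler_bound' hn hconn diam hdiam x hsum
    have hxxnn : 0 ≤ x ⬝ᵥ x := Finset.sum_nonneg fun k _ => mul_self_nonneg _
    have hnpos : (0:ℝ) < (n:ℝ) := by linarith
    have h6pos : (0:ℝ) < 6 * (diam:ℝ) * (n:ℝ)^3 := by positivity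
    have hQ2 : 2 * (x ⬝ᵥ x) ≤ (n:ℝ)^2 * (diam:ℝ) * Q := by
      have h1 := mul_le_mul_of_nonneg_left hQS
        (mul_nonneg (le_of_lt hnpos) (le_of_lt hdpos))
      nlinarith [hfied, h1]
    have hA : (x ⬝ᵥ x) / (6*(diam:ℝ)*(n:ℝ)^3) ≤ Q / (4*((n:ℝ)-1)) := by
      rw [div_le_div_iff₀ h6pos (by linarith : (0:ℝ) < 4*((n:ℝ)-1))]
      have h2 := mul_le_mul_of_nonneg_left hQ2 (by linarith : (0:ℝ) ≤ 2*((n:ℝ)-1))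
      nlinarith [h2, mul_nonneg (mul_nonneg (le_of_lt hdpos) hQnn)
        (by positivity : (0:ℝ) ≤ 4*(n:ℝ)^3 + 2*(n:ℝ)^2)]
    rw [hform, ht]
    have hrng : (1 - 1/(6*(diam:ℝ)*(n:ℝ)^3)) * (x ⬝ᵥ x)
        = x ⬝ᵥ x - (x ⬝ᵥ x)/(6*(diam:ℝ)*(n:ℝ)^3) := by ring
    rw [hrng]
    linarith [hA]
  -- spectral part
  have hWc := herm_charpoly' WrHerm
  have h12 : (⟨n-2, by omega⟩ : Fin n) ≠ (⟨n-1, by omega⟩ : Fin n) := by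
    simp only [ne_eq, Fin.mk.injEq]
    omega
  have hμ1 : t < μ ⟨n-2, by omega⟩ := hcon
  have hle : (⟨n-2, by omega⟩ : Fin n) ≤ (⟨n-1, by omega⟩ : Fin n) := by
    simp only [Fin.mk_le_mk]
    omega
  have hμ2 : t < μ ⟨n-1, by omega⟩ := lt_of_lt_of_le hμ1 (hmono hle)
  obtain ⟨j1, j2, hj12, hj1, hj2⟩ := two_large' μ WrHerm.eigenvalues t
    (hchar.symm.trans hWc) _ _ h12 hμ1 hμ2
  set v1 : Fin n → ℝ := ⇑(WrHerm.eigenvectorBasis j1) with hv1d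
  set v2 : Fin n → ℝ := ⇑(WrHerm.eigenvectorBasis j2) with hv2d
  have hv1 : Wr *ᵥ v1 = WrHerm.eigenvalues j1 • v1 := WrHerm.mulVec_eigenvectorBasis j1
  have hv2 : Wr *ᵥ v2 = WrHerm.eigenvalues j2 • v2 := WrHerm.mulVec_eigenvectorBasis j2
  have hdotb : ∀ A B : Fin n, (⇑(WrHerm.eigenvectorBasis A) : Fin n → ℝ) ⬝ᵥ
      (⇑(WrHerm.eigenvectorBasis B) : Fin n → ℝ) = if A = B then 1 else 0 := by
    intro A B
    have h := orthonormal_iff_ite.mp WrHerm.eigenvectorBasis.orthonormal A B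
    simpa [PiLp.inner_apply, RCLike.inner_apply, conj_trivial, dotProduct, mul_comm] using h
  have h11 : v1 ⬝ᵥ v1 = 1 := by simpa using hdotb j1 j1
  have h22 : v2 ⬝ᵥ v2 = 1 := by simpa using hdotb j2 j2
  have h12' : v1 ⬝ᵥ v2 = 0 := by simpa [hj12] using hdotb j1 j2
  have h21' : v2 ⬝ᵥ v1 = 0 := by simpa [Ne.symm hj12] using hdotb j2 j1
  clear hWc hchar hR hdiam hker hRsymm hRlb hdotb hmono hcon hμ1 hμ2 hPr hDr hWr
  set E1 : ℝ := WrHerm.eigenvalues j1 with hE1d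
  set E2 : ℝ := WrHerm.eigenvalues j2 with hE2d
  clear_value v1 v2 E1 E2
  set c1 : ℝ := ∑ k, v1 k with hc1d
  set c2 : ℝ := ∑ k, v2 k with hc2d
  clear_value c1 c2
  by_cases hc0 : c1 = 0 ∧ c2 = 0
  · have hq := hquad v1 (hc1d.symm.trans hc0.1)
    have hWv : v1 ⬝ᵥ (Wr *ᵥ v1) = E1 := by
      rw [hv1, dotProduct_smul, smul_eq_mul, h11, mul_one]
    rw [hWv, h11, mul_one] at hq
    linarith
  · set x : Fin n → ℝ := c2 • v1 - c1 • v2 with hxd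
    have hsx : ∑ k, x k = 0 := by
      simp only [hxd, Pi.sub_apply, Pi.smul_apply, smul_eq_mul]
      rw [Finset.sum_sub_distrib, ← Finset.mul_sum, ← Finset.mul_sum, ← hc1d, ← hc2d]
      ring
    have hxx : x ⬝ᵥ x = c2^2 + c1^2 := by
      rw [hxd]
      simp only [sub_dotProduct, dotProduct_sub, smul_dotProduct,
        dotProduct_smul, h11, h22, h12', h21', smul_eq_mul]
      ring
    have hWx : x ⬝ᵥ (Wr *ᵥ x)
        = c2^2 * E1 + c1^2 * E2 := by
      have hmv : Wr *ᵥ x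
          = c2 • (E1 • v1) - c1 • (E2 • v2) := by
        rw [hxd, Matrix.mulVec_sub, Matrix.mulVec_smul, Matrix.mulVec_smul, hv1, hv2]
      rw [hmv, hxd]
      simp only [sub_dotProduct, dotProduct_sub, smul_dotProduct,
        dotProduct_smul, h11, h22, h12', h21', smul_eq_mul]
      ring
    have hq := hquad x hsx
    rw [hWx, hxx] at hq
    rcases not_and_or.mp hc0 with h | h
    · have hc1sq : 0 < c1^2 := by positivity
      have ha1 := mul_le_mul_of_nonneg_left hj1.le (sq_nonneg c2)
      have ha2 := mul_lt_mul_of_pos_left hj2 hc1sq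
      nlinarith [hq, ha1, ha2]
    · have hc2sq : 0 < c2^2 := by positivity
      have ha1 := mul_lt_mul_of_pos_left hj1 hc2sq
      have ha2 := mul_le_mul_of_nonneg_left hj2.le (sq_nonneg c1)
      nlinarith [hq, ha1, ha2]
end

section
/- Let G be a connected simple graph on n ≥ 2 vertices with Laplacian matrix L, and let i ≠ j be any two vertices. Then for every vector v with L v = e_i − e_j, one has v_i − v_j ≥ 2/n; that is, the effective resistance between any two distinct vertices of a connected graph on n vertices is at least 2/n. -/
open Matrix BigOperators Finset

/-- The effective resistance between any two distinct vertices of a connected graph on `n`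
vertices is at least `2/n`: every `v` with `L v = e_i − e_j` has `v_i − v_j ≥ 2/n`. -/
theorem stmt15 (n : ℕ) (hn : 2 ≤ n) (G : SimpleGraph (Fin n)) [DecidableRel G.Adj]
    (hconn : G.Connected) (i j : Fin n) (hij : i ≠ j) :
    ∀ v : Fin n → ℝ, G.lapMatrix ℝ *ᵥ v = stdBasisVec i - stdBasisVec j →
      2 / (n : ℝ) ≤ v i - v j := by
  intro v hv
  set L := G.lapMatrix ℝ with hL
  set x : Fin n → ℝ := stdBasisVec i - stdBasisVec j with hx
  have hdot : ∀ w : Fin n → ℝ, w ⬝ᵥ x = w i - w j := by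
    intro w
    simp only [hx, dotProduct, Pi.sub_apply, stdBasisVec, mul_sub, mul_ite, mul_one, mul_zero,
      Finset.sum_sub_distrib, Finset.sum_ite_eq', Finset.mem_univ, if_true]
  have hPSD := (Matrix.posSemidef_iff_dotProduct_mulVec.mp (SimpleGraph.posSemidef_lapMatrix ℝ G)).2
  have hSymm : L.IsSymm := G.isSymm_lapMatrix (R := ℝ)
  have hquad : ∀ w : Fin n → ℝ, 0 ≤ w ⬝ᵥ (L *ᵥ w) := by
    intro w
    simpa using hPSD w
  set a : ℝ := v ⬝ᵥ (L *ᵥ v) with haa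
  set c : ℝ := x ⬝ᵥ (L *ᵥ x) with hcc
  have hxi : x i = 1 := by
    simp only [hx, Pi.sub_apply, stdBasisVec, if_pos rfl]
    rw [if_neg hij]; norm_num
  have hxj : x j = -1 := by
    simp only [hx, Pi.sub_apply, stdBasisVec, if_pos rfl]
    rw [if_neg (Ne.symm hij)]; norm_num
  have ha : a = v i - v j := by rw [haa, hv]; exact hdot v
  have hb : x ⬝ᵥ (L *ᵥ v) = 2 := by
    rw [hv, hdot x, hxi, hxj]; norm_num
  have hsym : v ⬝ᵥ (L *ᵥ x) = 2 := by
    have hflip : v ⬝ᵥ (L *ᵥ x) = x ⬝ᵥ (L *ᵥ v) := by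
      rw [Matrix.dotProduct_mulVec, ← Matrix.mulVec_transpose, hSymm.eq, dotProduct_comm]
    rw [hflip, hb]
  -- Cauchy-Schwarz via discriminant
  have hCS : 4 ≤ a * c := by
    have h : ∀ t : ℝ, 0 ≤ a * (t * t) + 4 * t + c := by
      intro t
      have := hquad (x + t • v)
      have expand : (x + t • v) ⬝ᵥ (L *ᵥ (x + t • v)) = a * (t * t) + 4 * t + c := by
        rw [Matrix.mulVec_add, Matrix.mulVec_smul, dotProduct_add, add_dotProduct,
          add_dotProduct, dotProduct_smul, dotProduct_smul, smul_dotProduct,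
          smul_dotProduct, hb, hsym]
        simp only [smul_eq_mul, haa, hcc]
        ring
      rw [expand] at this
      exact this
    have hd := discrim_le_zero h
    rw [discrim] at hd
    nlinarith [hd]
  -- bound c
  have hLx : ∀ k : Fin n, (L *ᵥ x) k
      = G.degree k * x k - ∑ u ∈ G.neighborFinset k, x u := by
    intro k
    exact G.lapMatrix_mulVec_apply k x
  have hsumN : ∀ k : Fin n, ∑ u ∈ G.neighborFinset k, x u
      = (if i ∈ G.neighborFinset k then (1:ℝ) else 0)
        - (if j ∈ G.neighborFinset k then (1:ℝ) else 0) := by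
    intro k
    simp [hx, stdBasisVec, Pi.sub_apply, Finset.sum_sub_distrib, Finset.sum_ite_eq',
      eq_comm]
  have hc : c = (L *ᵥ x) i - (L *ᵥ x) j := by
    rw [hcc, dotProduct_comm, hdot]
  have hselfi : i ∉ G.neighborFinset i := by simp
  have hselfj : j ∉ G.neighborFinset j := by simp
  have hdeg : ∀ k : Fin n, (G.degree k : ℝ) ≤ (n : ℝ) - 1 := by
    intro k
    have h1 := G.degree_lt_card_verts k
    rw [Fintype.card_fin] at h1
    have h2 : G.degree k + 1 ≤ n := h1
    have h3 : (G.degree k : ℝ) + 1 ≤ n := by exact_mod_cast h2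
    linarith
  have hcval : c ≤ 2 * n := by
    rw [hc, hLx i, hLx j, hsumN i, hsumN j, hxi, hxj]
    simp only [hselfi, hselfj, if_false]
    have := hdeg i
    have := hdeg j
    split_ifs <;> push_cast <;> nlinarith
  have ha0 : 0 ≤ a := hquad v
  have hn0 : (0:ℝ) < n := by positivity
  have key : 4 ≤ a * (2 * n) := le_trans hCS (by nlinarith)
  rw [← ha, div_le_iff₀ hn0]
  nlinarith
end
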